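/- Define F : ℝ → ℝ by F(x) = sinh((π−α)x)/sinh(πx) for x ≠ 0 and F(0) = 1 − α/π, where 0 < α < π. Then F is an even, positive, continuous function, F is strictly decreasing on [0, ∞), F(x) → 0 as x → ∞, and the range of F is the interval (0, 1 − α/π]. -/

import Mathlib

open Real Set Filter

lemma aux_sinh_lt_mul_cosh {t : ℝ} (ht : 0 < t) : Real.sinh t < t * Real.cosh t := by
  have hmono : StrictMonoOn (fun t => t * Real.cosh t - Real.sinh t) (Set.Ici 0) := by
    apply strictMonoOn_of_deriv_pos (convex_Ici 0)
    · exact ((continuous_id.mul Real.continuous_cosh).sub Real.continuous_sinh).continuousOn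
    · intro x hx
      rw [interior_Ici, mem_Ioi] at hx
      have hd : HasDerivAt (fun t => t * Real.cosh t - Real.sinh t)
          (1 * Real.cosh x + x * Real.sinh x - Real.cosh x) x :=
        ((hasDerivAt_id x).mul (Real.hasDerivAt_cosh x)).sub (Real.hasDerivAt_sinh x)
      rw [hd.deriv]
      have := Real.sinh_pos_iff.mpr hx
      nlinarith
  have := hmono (Set.mem_Ici.mpr (le_refl 0)) (Set.mem_Ici.mpr (le_of_lt ht)) ht
  simpa using this

lemma aux_sinh_div_mono : StrictMonoOn (fun t => Real.sinh t / t) (Set.Ioi 0) := by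
  apply strictMonoOn_of_deriv_pos (convex_Ioi 0)
  · exact Real.continuous_sinh.continuousOn.div continuousOn_id
      (fun x hx => ne_of_gt hx)
  · intro x hx
    rw [interior_Ioi, mem_Ioi] at hx
    have hd : HasDerivAt (fun t => Real.sinh t / t)
        ((Real.cosh x * x - Real.sinh x * 1) / x ^ 2) x :=
      (Real.hasDerivAt_sinh x).div (hasDerivAt_id x) (ne_of_gt hx)
    rw [hd.deriv]
    apply div_pos
    · nlinarith [aux_sinh_lt_mul_cosh hx]
    · positivity

lemma aux_key_ineq {b c x : ℝ} (hb : 0 < b) (hbc : b < c) (hx : 0 < x) :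
    b * Real.cosh (b * x) * Real.sinh (c * x) <
      c * Real.sinh (b * x) * Real.cosh (c * x) := by
  set s := (c - b) * x with hs
  set t := (c + b) * x with ht
  have hs0 : 0 < s := mul_pos (by linarith) hx
  have hst : s < t := by
    have : c - b < c + b := by linarith
    exact mul_lt_mul_of_pos_right this hx
  have h := aux_sinh_div_mono (mem_Ioi.mpr hs0) (mem_Ioi.mpr (hs0.trans hst)) hst
  rw [div_lt_div_iff₀ hs0 (hs0.trans hst)] at h
  -- h : sinh s * t < sinh t * s
  have hes : Real.sinh s = Real.sinh (c * x) * Real.cosh (b * x)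
      - Real.cosh (c * x) * Real.sinh (b * x) := by
    rw [hs, sub_mul, Real.sinh_sub]
  have het : Real.sinh t = Real.sinh (c * x) * Real.cosh (b * x)
      + Real.cosh (c * x) * Real.sinh (b * x) := by
    rw [ht, add_mul, Real.sinh_add]
  rw [hes, het, hs, ht] at h
  set P := Real.sinh (c * x) * Real.cosh (b * x)
  set Q := Real.cosh (c * x) * Real.sinh (b * x)
  have h2 : (P - Q) * (c + b) < (P + Q) * (c - b) := by
    have hx' : (0:ℝ) ≤ x := le_of_lt hx
    have : ((P - Q) * (c + b)) * x < ((P + Q) * (c - b)) * x := by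
      nlinarith [h]
    exact lt_of_mul_lt_mul_right this hx'
  have hgoal : b * P < c * Q := by nlinarith [h2]
  simp only [P, Q] at hgoal
  linarith [hgoal]

lemma aux_tendsto_sinh_div : Tendsto (fun y : ℝ => Real.sinh y / y) (nhdsWithin 0 {(0:ℝ)}ᶜ) (nhds 1) := by
  have h := Real.hasDerivAt_sinh 0
  rw [hasDerivAt_iff_tendsto_slope] at h
  rw [Real.cosh_zero] at h
  refine h.congr' ?_
  filter_upwards with y
  simp [slope_def_field, Real.sinh_zero]

lemma aux_tendsto_sinh_div_const {k : ℝ} (hk : k ≠ 0) :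
    Tendsto (fun x : ℝ => Real.sinh (k * x) / (k * x)) (nhdsWithin 0 {(0:ℝ)}ᶜ) (nhds 1) := by
  apply aux_tendsto_sinh_div.comp
  rw [tendsto_nhdsWithin_iff]
  constructor
  · have : Tendsto (fun x : ℝ => k * x) (nhds 0) (nhds (k * 0)) :=
      (continuous_const.mul continuous_id).tendsto 0
    simpa using this.mono_left nhdsWithin_le_nhds
  · filter_upwards [eventually_mem_nhdsWithin] with x hx
    exact mul_ne_zero hk hx

/-- `F(x) = sinh((π−α)x)/sinh(πx)` (with `F(0) = 1 − α/π`), `0 < α < π`,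
is even, positive, continuous, strictly decreasing on `[0,∞)`, tends to `0` at `+∞`,
and has range `(0, 1 − α/π]`. -/
theorem wedge_symbol_properties (α : ℝ) (hα : 0 < α) (hαπ : α < π) :
    ∀ F : ℝ → ℝ,
      F = (fun x => if x = 0 then 1 - α / π
            else Real.sinh ((π - α) * x) / Real.sinh (π * x)) →
      (∀ x, F (-x) = F x) ∧
      (∀ x, 0 < F x) ∧
      Continuous F ∧
      StrictAntiOn F (Set.Ici 0) ∧
      Tendsto F atTop (nhds 0) ∧
      Set.range F = Set.Ioc 0 (1 - α / π) := by
  intro F hF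
  have hπ : (0:ℝ) < π := Real.pi_pos
  have hβ : 0 < π - α := by linarith
  have hβπ : π - α < π := by linarith
  have hF0 : F 0 = 1 - α / π := by rw [hF]; simp
  have hFne : ∀ x : ℝ, x ≠ 0 → F x = Real.sinh ((π - α) * x) / Real.sinh (π * x) := by
    intro x hx; rw [hF]; simp [hx]
  -- evenness
  have heven : ∀ x, F (-x) = F x := by
    intro x
    by_cases hx : x = 0
    · subst hx; rw [neg_zero]
    · rw [hFne x hx, hFne (-x) (neg_ne_zero.mpr hx)]
      rw [mul_neg, mul_neg, Real.sinh_neg, Real.sinh_neg, neg_div_neg_eq]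
  -- positivity
  have hposβπ : 0 < 1 - α / π := by
    have : α / π < 1 := (div_lt_one hπ).mpr hαπ
    linarith
  have hpos : ∀ x, 0 < F x := by
    have hpos' : ∀ x, 0 < x → 0 < F x := by
      intro x hx
      rw [hFne x (ne_of_gt hx)]
      exact div_pos (Real.sinh_pos_iff.mpr (mul_pos hβ hx))
        (Real.sinh_pos_iff.mpr (mul_pos hπ hx))
    intro x
    rcases lt_trichotomy x 0 with h | h | h
    · rw [← heven x] at *; exact hpos' (-x) (by linarith)
    · subst h; rw [hF0]; exact hposβπ
    · exact hpos' x h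
  -- continuity
  have hcont : Continuous F := by
    rw [continuous_iff_continuousAt]
    intro x
    by_cases hx : x = 0
    · subst hx
      rw [ContinuousAt, ← nhdsNE_sup_pure, tendsto_sup]
      constructor
      · have h1 := aux_tendsto_sinh_div_const (ne_of_gt hβ)
        have h2 := aux_tendsto_sinh_div_const (ne_of_gt hπ)
        have h3 : Tendsto (fun x : ℝ =>
            ((π - α) / π) * ((Real.sinh ((π - α) * x) / ((π - α) * x)) /
              (Real.sinh (π * x) / (π * x)))) (nhdsWithin 0 {(0:ℝ)}ᶜ)
            (nhds (((π - α) / π) * (1 / 1))) :=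
          (h1.div h2 one_ne_zero).const_mul _
        have h4 : ((π - α) / π) * ((1:ℝ) / 1) = F 0 := by
          rw [hF0]; field_simp
        rw [h4] at h3
        refine h3.congr' ?_
        filter_upwards [eventually_mem_nhdsWithin] with y hy
        have hy' : (y:ℝ) ≠ 0 := hy
        rw [hFne y hy']
        have hβy : (π - α) * y ≠ 0 := mul_ne_zero (ne_of_gt hβ) hy'
        have hπy : π * y ≠ 0 := mul_ne_zero (ne_of_gt hπ) hy'
        have hsπ : Real.sinh (π * y) ≠ 0 := Real.sinh_ne_zero.mpr hπy
        field_simp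
      · exact tendsto_pure_nhds F 0
    · have hg : ContinuousAt (fun y => Real.sinh ((π - α) * y) / Real.sinh (π * y)) x := by
        apply ContinuousAt.div
        · exact (Real.continuous_sinh.comp (continuous_const.mul continuous_id)).continuousAt
        · exact (Real.continuous_sinh.comp (continuous_const.mul continuous_id)).continuousAt
        · exact Real.sinh_ne_zero.mpr (mul_ne_zero (ne_of_gt hπ) hx)
      apply hg.congr
      have hmem : {y : ℝ | y ≠ 0} ∈ nhds x :=
        isOpen_compl_singleton.mem_nhds hx
      filter_upwards [hmem] with y hy
      exact (hFne y hy).symm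
  -- strict anti
  have hanti : StrictAntiOn F (Set.Ici 0) := by
    apply strictAntiOn_of_deriv_neg (convex_Ici 0) hcont.continuousOn
    intro x hx
    rw [interior_Ici, mem_Ioi] at hx
    have hxne : x ≠ 0 := ne_of_gt hx
    have hFeq : F =ᶠ[nhds x] (fun y => Real.sinh ((π - α) * y) / Real.sinh (π * y)) := by
      filter_upwards [isOpen_compl_singleton.mem_nhds hxne] with y hy
      exact hFne y hy
    rw [hFeq.deriv_eq]
    have hnum : HasDerivAt (fun y => Real.sinh ((π - α) * y)) (Real.cosh ((π - α) * x) * (π - α)) x := by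
      have := (Real.hasDerivAt_sinh ((π - α) * x)).comp x ((hasDerivAt_id x).const_mul (π - α))
      simpa [Function.comp_def] using this
    have hden : HasDerivAt (fun y => Real.sinh (π * y)) (Real.cosh (π * x) * π) x := by
      have := (Real.hasDerivAt_sinh (π * x)).comp x ((hasDerivAt_id x).const_mul π)
      simpa [Function.comp_def] using this
    have hsπ : Real.sinh (π * x) ≠ 0 :=
      Real.sinh_ne_zero.mpr (mul_ne_zero (ne_of_gt hπ) hxne)
    have hd : HasDerivAt (fun y => Real.sinh ((π - α) * y) / Real.sinh (π * y)) _ x := hnum.div hden hsπ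
    rw [hd.deriv]
    apply div_neg_of_neg_of_pos
    · have := aux_key_ineq hβ hβπ hx
      nlinarith [this]
    · positivity
  -- tendsto atTop
  have hlim : Tendsto F atTop (nhds 0) := by
    have htop : Tendsto (fun x : ℝ => 2 * Real.exp (-(α * x))) atTop (nhds 0) := by
      have h1 : Tendsto (fun x : ℝ => α * x) atTop atTop :=
        Tendsto.const_mul_atTop hα tendsto_id
      have h2 := Real.tendsto_exp_neg_atTop_nhds_zero.comp h1
      have := h2.const_mul (2:ℝ)
      simpa using this
    apply squeeze_zero' (Filter.Eventually.of_forall fun x => (hpos x).le) _ htop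
    filter_upwards [eventually_ge_atTop (1:ℝ)] with x hx1
    have hx : (0:ℝ) < x := by linarith
    rw [hFne x (ne_of_gt hx), Real.sinh_eq, Real.sinh_eq]
    have hπx2 : (2:ℝ) ≤ Real.exp (π * x) := by
      have h1 : (1:ℝ) + π * x ≤ Real.exp (π * x) := Real.add_one_le_exp _ |>.trans_eq' (by ring)
      nlinarith [Real.pi_gt_three]
    have hexpneg : Real.exp (-(π * x)) ≤ 1 := Real.exp_le_one_iff.mpr (by nlinarith)
    have hDlow : Real.exp (π * x) / 4 ≤ (Real.exp (π * x) - Real.exp (-(π * x))) / 2 := by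
      nlinarith
    have hNup : (Real.exp ((π - α) * x) - Real.exp (-((π - α) * x))) / 2 ≤ Real.exp ((π - α) * x) / 2 := by
      have := Real.exp_pos (-((π - α) * x))
      linarith
    have hstep : (Real.exp ((π - α) * x) - Real.exp (-((π - α) * x))) / 2 /
        ((Real.exp (π * x) - Real.exp (-(π * x))) / 2) ≤
        Real.exp ((π - α) * x) / 2 / (Real.exp (π * x) / 4) := by
      apply div_le_div₀ (by positivity) hNup (by positivity) hDlow
    refine hstep.trans (le_of_eq ?_)
    have hkey : Real.exp (-(α * x)) * Real.exp (π * x) = Real.exp ((π - α) * x) := by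
      rw [← Real.exp_add]; ring_nf
    have hπxpos := Real.exp_pos (π * x)
    field_simp
    nlinarith [hkey]
  -- range
  have hle : ∀ x, F x ≤ F 0 := by
    intro x
    have habs : F x = F |x| := by
      rcases abs_choice x with h | h
      · rw [h]
      · rw [h, heven]
    rw [habs]
    rcases eq_or_lt_of_le (abs_nonneg x) with h | h
    · rw [← h]
    · exact (hanti (Set.self_mem_Ici) (Set.mem_Ici.mpr h.le) h).le
  have hrange : Set.range F = Set.Ioc 0 (1 - α / π) := by
    apply Set.eq_of_subset_of_subset
    · rintro y ⟨x, rfl⟩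
      refine ⟨hpos x, ?_⟩
      rw [← hF0]; exact hle x
    · rintro y ⟨hy0, hy1⟩
      have hev : ∀ᶠ x in atTop, F x < y := hlim.eventually (gt_mem_nhds hy0)
      obtain ⟨N, hN⟩ := (hev.and (eventually_ge_atTop (0:ℝ))).exists
      have hsub := intermediate_value_Icc' hN.2 hcont.continuousOn
      have hy : y ∈ Set.Icc (F N) (F 0) := ⟨hN.1.le, by rw [hF0]; exact hy1⟩
      obtain ⟨x, _, hx⟩ := hsub hy
      exact ⟨x, hx⟩
  exact ⟨heven, hpos, hcont, hanti, hlim, hrange⟩
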